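/- Let C be a skeletal left Rees category. Then C is right cancellative if and only if for every atom x and every invertible arrow g with the product gx defined, gx = x implies that g is an identity. (Equivalently, C is right cancellative if and only if for every atom x the partial homomorphism φ_x, defined by φ_x(g) = h whenever gx = xh with g, h invertible, is injective.) -/

import Mathlib

open CategoryTheory

universe v u

variable {C : Type u} [Category.{v} C]

/-- The set of all arrows of a category, as a sigma type. -/
abbrev CatArr (C : Type u) [Category.{v} C] : Type (max u v) := Σ (X : C) (Y : C), X ⟶ Y

/-- An arrow is an atom if it is not invertible and in any factorization one factor
is invertible. -/
def IsAtomArrow {X Y : C} (a : X ⟶ Y) : Prop :=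
  ¬ IsIso a ∧ ∀ ⦃Z : C⦄ (b : X ⟶ Z) (c : Z ⟶ Y), a = b ≫ c → IsIso b ∨ IsIso c

/-- The principal right ideal `aC` generated by an arrow `a`. -/
def rIdeal {X Y : C} (a : X ⟶ Y) : Set (CatArr C) :=
  { p | ∃ (Z : C) (b : Y ⟶ Z), p = ⟨X, Z, a ≫ b⟩ }

/-- The principal left ideal `Ca` generated by an arrow `a`. -/
def lIdeal {X Y : C} (a : X ⟶ Y) : Set (CatArr C) :=
  { p | ∃ (Z : C) (b : Z ⟶ X), p = ⟨Z, Y, b ≫ a⟩ }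

/-- The principal two-sided ideal `CaC` generated by an arrow `a`. -/
def twoIdeal {X Y : C} (a : X ⟶ Y) : Set (CatArr C) :=
  { p | ∃ (W Z : C) (b : W ⟶ X) (c : Y ⟶ Z), p = ⟨W, Z, b ≫ a ≫ c⟩ }

/-- A category is left cancellative if `ax = ay` implies `x = y`. -/
def LeftCancellativeCat (C : Type u) [Category.{v} C] : Prop :=
  ∀ ⦃X Y Z : C⦄ (a : X ⟶ Y) (x y : Y ⟶ Z), a ≫ x = a ≫ y → x = y

/-- A category is right cancellative if `xa = ya` implies `x = y`. -/
def RightCancellativeCat (C : Type u) [Category.{v} C] : Prop :=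
  ∀ ⦃X Y Z : C⦄ (x y : X ⟶ Y) (a : Y ⟶ Z), x ≫ a = y ≫ a → x = y

/-- A category is right rigid if principal right ideals that intersect are comparable. -/
def RightRigid (C : Type u) [Category.{v} C] : Prop :=
  ∀ ⦃X Y X' Y' : C⦄ (a : X ⟶ Y) (b : X' ⟶ Y'),
    (rIdeal a ∩ rIdeal b).Nonempty → rIdeal a ⊆ rIdeal b ∨ rIdeal b ⊆ rIdeal a

/-- A category is equidivisible if every equality `ab = cd` admits an intermediate arrow. -/
def Equidivisible (C : Type u) [Category.{v} C] : Prop :=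
  ∀ ⦃W X Y Z : C⦄ (a : W ⟶ X) (b : X ⟶ Z) (c : W ⟶ Y) (d : Y ⟶ Z),
    a ≫ b = c ≫ d →
      (∃ u : Y ⟶ X, a = c ≫ u ∧ d = u ≫ b) ∨ (∃ v : X ⟶ Y, c = a ≫ v ∧ b = v ≫ d)

/-- A length functor on a category: additive on composition, zero exactly on invertible
arrows, one exactly on atoms. -/
structure LengthFunctor (C : Type u) [Category.{v} C] where
  len : ∀ ⦃X Y : C⦄, (X ⟶ Y) → ℕ
  len_comp : ∀ ⦃X Y Z : C⦄ (f : X ⟶ Y) (g : Y ⟶ Z), len (f ≫ g) = len f + len g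
  len_eq_zero_iff : ∀ ⦃X Y : C⦄ (f : X ⟶ Y), len f = 0 ↔ IsIso f
  len_eq_one_iff : ∀ ⦃X Y : C⦄ (f : X ⟶ Y), len f = 1 ↔ IsAtomArrow f

/-- A subset of the arrows is a principal right ideal if it has the form `xC`. -/
def IsPrincipalRightIdeal (S : Set (CatArr C)) : Prop :=
  ∃ (U V : C) (x : U ⟶ V), S = rIdeal x

/-- The interval `[aC, bC]` of principal right ideals between `aC` and `bC`. -/
def rInterval {X Y Z W : C} (a : X ⟶ Y) (b : Z ⟶ W) : Set (Set (CatArr C)) :=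
  { S | IsPrincipalRightIdeal S ∧ rIdeal a ⊆ S ∧ S ⊆ rIdeal b }

/-- A left Rees category: left cancellative, right rigid, and each principal right
ideal is properly contained in only finitely many principal right ideals. -/
def IsLeftReesCategory (C : Type u) [Category.{v} C] : Prop :=
  LeftCancellativeCat C ∧ RightRigid C ∧
    ∀ ⦃X Y : C⦄ (a : X ⟶ Y),
      { S : Set (CatArr C) | IsPrincipalRightIdeal S ∧ rIdeal a ⊂ S }.Finite

/-- A category is skeletal if every invertible arrow has equal domain and codomain. -/
def SkeletalCat (C : Type u) [Category.{v} C] : Prop :=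
  ∀ ⦃X Y : C⦄ (g : X ⟶ Y), IsIso g → X = Y

/-! ### Auxiliary lemmas -/

lemma self_mem_rIdeal {X Y : C} (a : X ⟶ Y) : (⟨X, Y, a⟩ : CatArr C) ∈ rIdeal a :=
  ⟨Y, 𝟙 Y, by simp⟩

lemma fst_eq_of_mem_rIdeal {X Y : C} {a : X ⟶ Y} {p : CatArr C}
    (hp : p ∈ rIdeal a) : p.1 = X := by
  obtain ⟨Z, b, rfl⟩ := hp
  rfl

lemma mem_rIdeal_iff {X Y W : C} (a : X ⟶ Y) (f : X ⟶ W) :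
    (⟨X, W, f⟩ : CatArr C) ∈ rIdeal a ↔ ∃ b : Y ⟶ W, f = a ≫ b := by
  constructor
  · rintro ⟨Z, b, hZ⟩
    obtain ⟨-, h2⟩ := Sigma.mk.inj_iff.mp hZ
    rw [heq_eq_eq] at h2
    obtain ⟨h3, h4⟩ := Sigma.mk.inj_iff.mp h2
    subst h3
    exact ⟨b, eq_of_heq h4⟩
  · rintro ⟨b, rfl⟩
    exact ⟨W, b, rfl⟩

lemma rIdeal_subset_of_factor {X Y W : C} {a : X ⟶ Y} {b : X ⟶ W} (c : W ⟶ Y)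
    (hfac : a = b ≫ c) : rIdeal a ⊆ rIdeal b := by
  rintro p ⟨Z, d, rfl⟩
  exact ⟨Z, c ≫ d, by rw [hfac, Category.assoc]⟩

lemma rIdeal_subset_rIdeal_id {X Y : C} (a : X ⟶ Y) :
    rIdeal a ⊆ rIdeal (𝟙 X) :=
  rIdeal_subset_of_factor a (by simp)

lemma exists_factor_of_rIdeal_subset {X Y W : C} {a : X ⟶ Y} {b : X ⟶ W}
    (hs : rIdeal a ⊆ rIdeal b) : ∃ c : W ⟶ Y, a = b ≫ c :=
  (mem_rIdeal_iff b a).mp (hs (self_mem_rIdeal a))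

/-- In a left cancellative category a split arrow is invertible. -/
lemma isIso_of_comp_eq_id (hlc : LeftCancellativeCat C) {X Y : C}
    {p : X ⟶ Y} {q : Y ⟶ X} (h : p ≫ q = 𝟙 X) : IsIso p := by
  have h2 : (q ≫ p) ≫ (q ≫ p) = (q ≫ p) ≫ 𝟙 Y := by
    rw [Category.comp_id]
    calc (q ≫ p) ≫ q ≫ p = q ≫ (p ≫ q) ≫ p := by simp only [Category.assoc]
    _ = q ≫ p := by rw [h]; simp
  exact ⟨q, h, hlc (q ≫ p) _ _ h2⟩

lemma isIso_of_rIdeal_eq_id (hlc : LeftCancellativeCat C) {X V : C} {x : X ⟶ V}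
    (h : rIdeal x = rIdeal (𝟙 X)) : IsIso x := by
  have hmem : (⟨X, X, 𝟙 X⟩ : CatArr C) ∈ rIdeal x := by
    rw [h]; exact self_mem_rIdeal _
  obtain ⟨c, hc⟩ := (mem_rIdeal_iff x (𝟙 X)).mp hmem
  exact isIso_of_comp_eq_id hlc hc.symm

lemma rIdeal_eq_id_of_isIso {X V : C} {x : X ⟶ V} (h : IsIso x) :
    rIdeal x = rIdeal (𝟙 X) := by
  apply Set.Subset.antisymm (rIdeal_subset_rIdeal_id x)
  exact rIdeal_subset_of_factor (inv x) (by simp)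

/-- Left cancellative + right rigid implies equidivisible. -/
lemma equidivisible_of_rigid (hlc : LeftCancellativeCat C) (hrr : RightRigid C) :
    Equidivisible C := by
  intro W X Y Z a b c d hcomp
  have hne : (rIdeal a ∩ rIdeal c).Nonempty :=
    ⟨⟨W, Z, a ≫ b⟩, ⟨Z, b, rfl⟩, ⟨Z, d, by rw [hcomp]⟩⟩
  rcases hrr a c hne with hs | hs
  · obtain ⟨u, hu⟩ := exists_factor_of_rIdeal_subset hs
    refine Or.inl ⟨u, hu, ?_⟩
    apply hlc c
    rw [← hcomp, hu, Category.assoc]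
  · obtain ⟨v, hv⟩ := exists_factor_of_rIdeal_subset hs
    refine Or.inr ⟨v, hv, ?_⟩
    apply hlc a
    rw [hcomp, hv, Category.assoc]

/-- Every non-invertible arrow in a left Rees category factors through an atom. -/
lemma exists_atom_factor (h : IsLeftReesCategory C) {X Y : C} (a : X ⟶ Y)
    (hni : ¬ IsIso a) : ∃ (V : C) (x : X ⟶ V) (b : V ⟶ Y), IsAtomArrow x ∧ a = x ≫ b := by
  obtain ⟨hlc, hrr, hfin⟩ := h
  set T : Set (Set (CatArr C)) :=
    {S | IsPrincipalRightIdeal S ∧ rIdeal a ⊆ S ∧ S ≠ rIdeal (𝟙 X)} with hT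
  have hTfin : T.Finite := by
    apply Set.Finite.subset (Set.Finite.insert (rIdeal a) (hfin a))
    rintro S ⟨hp, hsub, hne⟩
    rcases eq_or_ne S (rIdeal a) with rfl | hne'
    · exact Set.mem_insert _ _
    · exact Set.mem_insert_of_mem _ ⟨hp, hsub, fun hle => hne' (Set.Subset.antisymm hle hsub)⟩
  have hTne : T.Nonempty := by
    refine ⟨rIdeal a, ⟨X, Y, a, rfl⟩, subset_rfl, fun heq => hni ?_⟩
    exact isIso_of_rIdeal_eq_id hlc heq
  obtain ⟨M, hM, hmax⟩ := Set.Finite.exists_maximalFor id T hTfin hTne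
  obtain ⟨⟨U, W, c, rfl⟩, hsub, hne⟩ := hM
  have hXU : X = U := fst_eq_of_mem_rIdeal (hsub (self_mem_rIdeal a))
  subst hXU
  obtain ⟨b, hb⟩ := exists_factor_of_rIdeal_subset hsub
  refine ⟨W, c, b, ⟨fun hiso => hne (rIdeal_eq_id_of_isIso hiso), ?_⟩, hb⟩
  intro Z p q hfac
  by_cases hp : IsIso p
  · exact Or.inl hp
  refine Or.inr ?_
  have hpT : rIdeal p ∈ T := by
    refine ⟨⟨X, Z, p, rfl⟩, hsub.trans (rIdeal_subset_of_factor q hfac), fun heq => hp ?_⟩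
    exact isIso_of_rIdeal_eq_id hlc heq
  have hcp : rIdeal c ⊆ rIdeal p := rIdeal_subset_of_factor q hfac
  have heq : rIdeal c = rIdeal p := Set.Subset.antisymm hcp (hmax hpT hcp)
  obtain ⟨d, hd⟩ := exists_factor_of_rIdeal_subset heq.symm.subset
  have hdq : d ≫ q = 𝟙 W := by
    apply hlc c
    rw [Category.comp_id, ← Category.assoc, ← hd, ← hfac]
  have hqd : q ≫ d = 𝟙 Z := by
    apply hlc p
    rw [Category.comp_id, hd, Category.assoc, ← Category.assoc d q, hdq, Category.id_comp]
  exact ⟨d, hqd, hdq⟩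

/-- All principal right ideals containing `rIdeal a`. -/
def Jset {X Y : C} (a : X ⟶ Y) : Set (Set (CatArr C)) :=
  {S | IsPrincipalRightIdeal S ∧ rIdeal a ⊆ S}

lemma Jset_finite (h : IsLeftReesCategory C) {X Y : C} (a : X ⟶ Y) :
    (Jset a).Finite := by
  apply Set.Finite.subset (Set.Finite.insert (rIdeal a) (h.2.2 a))
  rintro S ⟨hp, hsub⟩
  rcases eq_or_ne S (rIdeal a) with rfl | hne'
  · exact Set.mem_insert _ _
  · exact Set.mem_insert_of_mem _ ⟨hp, hsub, fun hle => hne' (Set.Subset.antisymm hle hsub)⟩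

lemma Jset_shape {V Y : C} {b : V ⟶ Y} {S : Set (CatArr C)} (hS : S ∈ Jset b) :
    ∃ (W : C) (c : V ⟶ W), S = rIdeal c ∧ rIdeal b ⊆ rIdeal c := by
  obtain ⟨⟨U, W, c, rfl⟩, hsub⟩ := hS
  have hVU : V = U := fst_eq_of_mem_rIdeal (hsub (self_mem_rIdeal b))
  subst hVU
  exact ⟨W, c, rfl, hsub⟩

/-- Pushing a set of arrows with domain `V` forward along `x : X ⟶ V`. -/
def Fmap {X V : C} (x : X ⟶ V) (S : Set (CatArr C)) : Set (CatArr C) :=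
  {q | ∃ (Z : C) (c : V ⟶ Z), (⟨V, Z, c⟩ : CatArr C) ∈ S ∧ q = ⟨X, Z, x ≫ c⟩}

lemma Fmap_rIdeal {X V W : C} (x : X ⟶ V) (c : V ⟶ W) :
    Fmap x (rIdeal c) = rIdeal (x ≫ c) := by
  ext q
  constructor
  · rintro ⟨Z, c', hc', rfl⟩
    obtain ⟨d, rfl⟩ := (mem_rIdeal_iff c c').mp hc'
    exact ⟨Z, d, by rw [Category.assoc]⟩
  · rintro ⟨Z, d, rfl⟩
    exact ⟨Z, c ≫ d, ⟨Z, d, rfl⟩, by rw [Category.assoc]⟩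

lemma rIdeal_subset_cancel (hlc : LeftCancellativeCat C) {X V W W' : C}
    (x : X ⟶ V) {c : V ⟶ W} {c' : V ⟶ W'}
    (hs : rIdeal (x ≫ c) ⊆ rIdeal (x ≫ c')) : rIdeal c ⊆ rIdeal c' := by
  rintro p ⟨Z, d, rfl⟩
  have hmem : (⟨X, Z, (x ≫ c) ≫ d⟩ : CatArr C) ∈ rIdeal (x ≫ c) := ⟨Z, d, rfl⟩
  obtain ⟨e, he⟩ := (mem_rIdeal_iff (x ≫ c') ((x ≫ c) ≫ d)).mp (hs hmem)
  have : c ≫ d = c' ≫ e := by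
    apply hlc x
    simpa only [Category.assoc] using he
  exact ⟨Z, e, by rw [this]⟩

/-- The key counting lemma: precomposing with a non-invertible arrow strictly
increases the number of principal right ideals above. -/
lemma Jset_ncard_lt (h : IsLeftReesCategory C) {X V Y : C} (x : X ⟶ V)
    (hx : ¬ IsIso x) (b : V ⟶ Y) : (Jset b).ncard < (Jset (x ≫ b)).ncard := by
  have hlc := h.1
  have himg : Fmap x '' Jset b ⊆ Jset (x ≫ b) := by
    rintro _ ⟨S, hS, rfl⟩
    obtain ⟨W, c, rfl, hsub⟩ := Jset_shape hS
    rw [Fmap_rIdeal]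
    obtain ⟨d, hd⟩ := exists_factor_of_rIdeal_subset hsub
    refine ⟨⟨X, W, x ≫ c, rfl⟩, rIdeal_subset_of_factor d ?_⟩
    rw [hd, Category.assoc]
  have hinj : Set.InjOn (Fmap x) (Jset b) := by
    intro S hS S' hS' heq
    obtain ⟨W, c, rfl, -⟩ := Jset_shape hS
    obtain ⟨W', c', rfl, -⟩ := Jset_shape hS'
    rw [Fmap_rIdeal, Fmap_rIdeal] at heq
    exact Set.Subset.antisymm (rIdeal_subset_cancel hlc x heq.subset)
      (rIdeal_subset_cancel hlc x heq.symm.subset)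
  have hid_mem : rIdeal (𝟙 X) ∈ Jset (x ≫ b) :=
    ⟨⟨X, X, 𝟙 X, rfl⟩, rIdeal_subset_rIdeal_id _⟩
  have hid_nmem : rIdeal (𝟙 X) ∉ Fmap x '' Jset b := by
    rintro ⟨S, hS, hSeq⟩
    obtain ⟨W, c, rfl, -⟩ := Jset_shape hS
    rw [Fmap_rIdeal] at hSeq
    apply hx
    have hmem : (⟨X, X, 𝟙 X⟩ : CatArr C) ∈ rIdeal (x ≫ c) := by
      rw [hSeq]; exact self_mem_rIdeal _
    obtain ⟨e, he⟩ := (mem_rIdeal_iff (x ≫ c) (𝟙 X)).mp hmem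
    exact isIso_of_comp_eq_id hlc (by rw [← Category.assoc, ← he])
  have himgfin : (Fmap x '' Jset b).Finite := (Jset_finite h b).image _
  have h1 : (insert (rIdeal (𝟙 X)) (Fmap x '' Jset b)).ncard
      = (Fmap x '' Jset b).ncard + 1 := Set.ncard_insert_of_notMem hid_nmem himgfin
  have h2 : insert (rIdeal (𝟙 X)) (Fmap x '' Jset b) ⊆ Jset (x ≫ b) := by
    rw [Set.insert_subset_iff]; exact ⟨hid_mem, himg⟩
  have h3 := Set.ncard_le_ncard h2 (Jset_finite h (x ≫ b))
  rw [h1, Set.ncard_image_of_injOn hinj] at h3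
  omega

/-- The key stabilizer lemma: if every atom has trivial invertible stabilizer, then
`u ≫ a = a` forces `u = 𝟙`. -/
lemma stab_eq_id (h : IsLeftReesCategory C)
    (hat : ∀ ⦃X Y : C⦄ (x : X ⟶ Y), IsAtomArrow x →
      ∀ g : X ⟶ X, IsIso g → g ≫ x = x → g = 𝟙 X) :
    ∀ (n : ℕ) {X Y : C} (a : X ⟶ Y), (Jset a).ncard ≤ n →
      ∀ u : X ⟶ X, u ≫ a = a → u = 𝟙 X := by
  intro n
  induction n with
  | zero =>
    intro X Y a hcard u hu
    exfalso
    have hpos : 0 < (Jset a).ncard := by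
      refine Set.ncard_pos (Jset_finite h a) |>.mpr ⟨rIdeal a, ⟨X, Y, a, rfl⟩, subset_rfl⟩
    omega
  | succ n ih =>
    intro X Y a hcard u hu
    by_cases hiso : IsIso a
    · have := congrArg (· ≫ inv a) hu
      simpa using this
    · obtain ⟨V, x, b, hxatom, rfl⟩ := exists_atom_factor h a hiso
      have hxni : ¬ IsIso x := hxatom.1
      have hlt : (Jset b).ncard < (Jset (x ≫ b)).ncard := Jset_ncard_lt h x hxni b
      have hble : (Jset b).ncard ≤ n := by omega
      have hequi := equidivisible_of_rigid h.1 h.2.1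
      have hu' : (u ≫ x) ≫ b = x ≫ b := by simpa only [Category.assoc] using hu
      have key : u ≫ x = x := by
        rcases hequi (u ≫ x) b x b hu' with ⟨w, h1, h2⟩ | ⟨v, h1, h2⟩
        · have hw : w = 𝟙 V := ih b hble w h2.symm
          rw [hw, Category.comp_id] at h1
          exact h1
        · have hv : v = 𝟙 V := ih b hble v h2.symm
          rw [hv, Category.comp_id] at h1
          exact h1.symm
      have huiso : IsIso u := by
        rcases hxatom.2 u x key.symm with hi | hi
        · exact hi
        · exact absurd hi hxni
      exact hat x hxatom u huiso key

/-- A skeletal left Rees category is right cancellative iff for every atom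
`x` and every invertible `g` with `gx` defined, `gx = x` implies that `g` is an
identity. -/
theorem rightCancellative_iff_free_on_atoms (h : IsLeftReesCategory C)
    (hsk : SkeletalCat C) :
    RightCancellativeCat C ↔
      ∀ ⦃X Y : C⦄ (x : X ⟶ Y), IsAtomArrow x →
        ∀ g : X ⟶ X, IsIso g → g ≫ x = x → g = 𝟙 X := by
  constructor
  · intro hrc X Y x hx g hg hgx
    exact hrc g (𝟙 X) x (by simpa using hgx)
  · intro hat X Y Z p q a hpq
    have hequi := equidivisible_of_rigid h.1 h.2.1
    rcases hequi p a q a hpq with ⟨u, h1, h2⟩ | ⟨v, h1, h2⟩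
    · have hu : u = 𝟙 Y := stab_eq_id h hat (Jset a).ncard a le_rfl u h2.symm
      rw [hu, Category.comp_id] at h1
      exact h1
    · have hv : v = 𝟙 Y := stab_eq_id h hat (Jset a).ncard a le_rfl v h2.symm
      rw [hv, Category.comp_id] at h1
      exact h1.symm
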